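/- Let p_1, …, p_n ∈ [0, 1). For a nonempty subset s ⊆ {1, …, n} write p_s = ∏_{i ∈ s} p_i. Then ∑_{k=1}^∞ (1 − ∏_{i=1}^n (1 − p_i^k)) = ∑_{∅ ≠ s ⊆ {1,…,n}} (−1)^{|s|−1} (1/(1 − p_s) − 1), and in particular the series on the left converges. -/

import Mathlib

open Finset

/-- For `p 1, …, p n ∈ [0,1)`,
`∑_{k=1}^∞ (1 - ∏ i (1 - p i ^ k))
  = ∑_{∅ ≠ s ⊆ {1,…,n}} (-1)^(|s|-1) (1/(1 - p_s) - 1)`,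
where `p_s = ∏_{i ∈ s} p i`; in particular the series converges. -/
theorem stmt_2 (n : ℕ) (p : Fin n → ℝ) (hp : ∀ i, p i ∈ Set.Ico (0 : ℝ) 1) :
    HasSum (fun k : ℕ => 1 - ∏ i : Fin n, (1 - p i ^ (k + 1)))
      (∑ s ∈ (univ : Finset (Fin n)).powerset.filter (fun s => s ≠ ∅),
        (-1 : ℝ) ^ (s.card - 1) * (1 / (1 - ∏ i ∈ s, p i) - 1)) := by
  set F := (univ : Finset (Fin n)).powerset.filter (fun s => s ≠ ∅) with hF
  have hps : ∀ s ∈ F, 0 ≤ ∏ i ∈ s, p i ∧ ∏ i ∈ s, p i < 1 := by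
    intro s hs
    simp only [hF, mem_filter, mem_powerset] at hs
    obtain ⟨-, hne⟩ := hs
    obtain ⟨i, hi⟩ := nonempty_iff_ne_empty.mpr hne
    refine ⟨Finset.prod_nonneg fun j _ => (hp j).1, ?_⟩
    have h1 : ∏ j ∈ s, p j = p i * ∏ j ∈ s.erase i, p j :=
      (Finset.mul_prod_erase s p hi).symm
    have h2 : ∏ j ∈ s.erase i, p j ≤ 1 :=
      Finset.prod_le_one (fun j _ => (hp j).1) (fun j _ => (hp j).2.le)
    calc ∏ j ∈ s, p j = p i * ∏ j ∈ s.erase i, p j := h1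
      _ ≤ p i * 1 := mul_le_mul_of_nonneg_left h2 (hp i).1
      _ < 1 := by simpa using (hp i).2
  have hgeo : ∀ s ∈ F, HasSum (fun k : ℕ => (-1 : ℝ) ^ (s.card - 1) * (∏ i ∈ s, p i) ^ (k + 1))
      ((-1 : ℝ) ^ (s.card - 1) * (1 / (1 - ∏ i ∈ s, p i) - 1)) := by
    intro s hs
    obtain ⟨h0, h1⟩ := hps s hs
    set r := ∏ i ∈ s, p i
    have hg : HasSum (fun k : ℕ => r ^ k) (1 - r)⁻¹ := hasSum_geometric_of_lt_one h0 h1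
    have hg' : HasSum (fun k : ℕ => r ^ (k + 1)) (1 / (1 - r) - 1) := by
      have := hg.mul_left r
      have hr : (1 : ℝ) - r ≠ 0 := by linarith
      have heq : r * (1 - r)⁻¹ = 1 / (1 - r) - 1 := by field_simp; ring
      simpa [pow_succ, mul_comm, heq] using this
    exact hg'.mul_left _
  have hsum := hasSum_sum hgeo
  convert hsum using 2 with k
  -- inclusion-exclusion
  have hie : ∏ i : Fin n, (1 - p i ^ (k + 1)) =
      ∑ s ∈ (univ : Finset (Fin n)).powerset, (-1 : ℝ) ^ s.card * (∏ i ∈ s, p i) ^ (k + 1) := by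
    have hpr := Finset.prod_add (fun i : Fin n => -(p i ^ (k + 1))) (fun _ => (1 : ℝ)) univ
    have : ∏ i : Fin n, (1 - p i ^ (k + 1)) = ∏ i : Fin n, (-(p i ^ (k + 1)) + 1) := by
      apply Finset.prod_congr rfl; intro i _; ring
    rw [this, hpr]
    apply Finset.sum_congr rfl
    intro s _
    rw [Finset.prod_const_one, mul_one]
    calc (∏ i ∈ s, -p i ^ (k + 1))
        = ∏ i ∈ s, (-1 : ℝ) * p i ^ (k + 1) := by
          apply Finset.prod_congr rfl; intro i _; ring
      _ = (∏ _i ∈ s, (-1 : ℝ)) * ∏ i ∈ s, p i ^ (k + 1) := Finset.prod_mul_distrib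
      _ = (-1 : ℝ) ^ s.card * (∏ i ∈ s, p i) ^ (k + 1) := by
          rw [Finset.prod_const, Finset.prod_pow]
  have hmem : (∅ : Finset (Fin n)) ∈ (univ : Finset (Fin n)).powerset := by simp
  have hFe : F = (univ : Finset (Fin n)).powerset.erase ∅ := by
    ext s; simp [hF, Finset.mem_erase, and_comm]
  have hsplit := Finset.add_sum_erase (univ : Finset (Fin n)).powerset
    (fun s => (-1 : ℝ) ^ s.card * (∏ i ∈ s, p i) ^ (k + 1)) hmem
  rw [hie, ← hsplit, ← hFe]
  simp only [Finset.card_empty, pow_zero, Finset.prod_empty, one_pow, mul_one]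
  rw [sub_add_cancel_left, ← Finset.sum_neg_distrib]
  apply Finset.sum_congr rfl
  intro s hs
  have hcard : 1 ≤ s.card := by
    simp only [hF, mem_filter] at hs
    exact Finset.card_pos.mpr (nonempty_iff_ne_empty.mpr hs.2)
  have hpow : (-1 : ℝ) ^ s.card = -(-1 : ℝ) ^ (s.card - 1) := by
    conv_lhs => rw [← Nat.succ_pred_eq_of_pos hcard]
    rw [pow_succ, Nat.pred_eq_sub_one]; ring
  rw [hpow]; ring
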